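/- For d = 1 with Γ¹ = [[0,0],[i,0]], Γ^{-1} = (Γ¹)†, the Dirac–Connes action equals the staggered action under the double-spacing map: for any finitely supported φ : ℤ → ℂ, setting ψ(x) = (φ(2x)/√2, φ(2x+1)/√2) ∈ ℂ², one has ∑_{x∈ℤ} ψ(x)† (𝒟_dyn ψ)(x) = ∑_{n∈ℤ} \overline{φ(n)} (𝒟_S φ)(n), where 𝒟_dyn = Γ¹∂_+ + Γ^{-1}∂_− with (∂_± ψ)(x) = ψ(x±1) − ψ(x), and (𝒟_S φ)(n) = i·(φ(n+1) − φ(n−1))/2. -/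

import Mathlib

open Function Set

private lemma finsum_even_odd (f : ℤ → ℂ) (hf : (support f).Finite) :
    (∑ᶠ n : ℤ, f n) = (∑ᶠ x : ℤ, f (2 * x)) + ∑ᶠ x : ℤ, f (2 * x + 1) := by
  have hi1 : Injective (fun x : ℤ => 2 * x) := fun a b h => by dsimp only at h; omega
  have hi2 : Injective (fun x : ℤ => 2 * x + 1) := fun a b h => by dsimp only at h; omega
  have hu : range (fun x : ℤ => 2 * x) ∪ range (fun x : ℤ => 2 * x + 1) = univ := by
    ext n
    simp only [mem_union, mem_range, mem_univ, iff_true]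
    rcases Int.even_or_odd n with ⟨k, hk⟩ | ⟨k, hk⟩
    · exact Or.inl ⟨k, by omega⟩
    · exact Or.inr ⟨k, by omega⟩
  have hd : Disjoint (range (fun x : ℤ => 2 * x)) (range (fun x : ℤ => 2 * x + 1)) := by
    rw [Set.disjoint_left]
    rintro n ⟨a, ha⟩ ⟨b, hb⟩; dsimp only at ha hb; omega
  calc (∑ᶠ n : ℤ, f n) = ∑ᶠ n ∈ (range (fun x : ℤ => 2 * x) ∪ range (fun x : ℤ => 2 * x + 1)), f n := by
        rw [hu, finsum_mem_univ]
    _ = (∑ᶠ n ∈ range (fun x : ℤ => 2 * x), f n) + ∑ᶠ n ∈ range (fun x : ℤ => 2 * x + 1), f n :=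
        finsum_mem_union' hd (hf.inter_of_right _) (hf.inter_of_right _)
    _ = (∑ᶠ x : ℤ, f (2 * x)) + ∑ᶠ x : ℤ, f (2 * x + 1) := by
        rw [finsum_mem_range hi1, finsum_mem_range hi2]

/-- For `d = 1`, under the double-spacing map `ψ(x) = (φ(2x)/√2, φ(2x+1)/√2)`,
the Dirac-Connes action equals the staggered action. -/
theorem d1_Dirac_Connes_eq_staggered_action
    (φ : ℤ → ℂ) (hφ : (Function.support φ).Finite) :
    let Γ1 : Matrix (Fin 2) (Fin 2) ℂ := !![0, 0; Complex.I, 0]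
    let Γm1 : Matrix (Fin 2) (Fin 2) ℂ := Matrix.conjTranspose Γ1
    let ψ : ℤ → Fin 2 → ℂ :=
      fun x => ![φ (2 * x) / (Real.sqrt 2 : ℂ), φ (2 * x + 1) / (Real.sqrt 2 : ℂ)]
    let Ddyn : (ℤ → Fin 2 → ℂ) → ℤ → Fin 2 → ℂ := fun χ x =>
      Γ1.mulVec (χ (x + 1) - χ x) + Γm1.mulVec (χ (x - 1) - χ x)
    (∑ᶠ x : ℤ, ∑ i : Fin 2, (starRingEnd ℂ) (ψ x i) * Ddyn ψ x i)
      = ∑ᶠ n : ℤ, (starRingEnd ℂ) (φ n) * (Complex.I * (φ (n + 1) - φ (n - 1)) / 2) := by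
  intro Γ1 Γm1 ψ Ddyn
  set f : ℤ → ℂ := fun n => (starRingEnd ℂ) (φ n) * (Complex.I * (φ (n + 1) - φ (n - 1)) / 2)
    with hf
  have hfs : support f ⊆ support φ := by
    intro n hn
    simp only [hf, mem_support, ne_eq] at hn ⊢
    intro h; apply hn; rw [h]; simp
  have hfin : (support f).Finite := hφ.subset hfs
  have hpt : ∀ x : ℤ, (∑ i : Fin 2, (starRingEnd ℂ) (ψ x i) * Ddyn ψ x i)
      = f (2 * x) + f (2 * x + 1) := by
    intro x
    have h2 : ((Real.sqrt 2 : ℝ) : ℂ) * ((Real.sqrt 2 : ℝ) : ℂ) = 2 := by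
      rw [← Complex.ofReal_mul, Real.mul_self_sqrt (by norm_num)]
      norm_num
    have hne : ((Real.sqrt 2 : ℝ) : ℂ) ≠ 0 := by
      intro h
      rw [h, mul_zero] at h2
      norm_num at h2
    simp only [ψ, Ddyn, Γ1, Γm1, Fin.sum_univ_two, Matrix.mulVec, dotProduct,
      Fin.sum_univ_two, Matrix.cons_val', Matrix.cons_val_zero, Matrix.cons_val_one,
      Matrix.head_cons, Matrix.empty_val', Matrix.cons_val_fin_one, Matrix.head_fin_const,
      Matrix.conjTranspose_apply, Matrix.of_apply, Pi.add_apply, Pi.sub_apply, map_div₀, Complex.conj_ofReal,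
      map_zero, star_zero, RingHom.map_zero, Complex.conj_I, hf]
    have e1 : 2 * (x + 1) = 2 * x + 1 + 1 := by ring
    have e2 : 2 * (x - 1) + 1 = 2 * x - 1 := by ring
    have e3 : 2 * x + 1 - 1 = 2 * x := by ring
    have e4 : 2 * x + 1 + 1 = 2 * (x + 1) := by ring
    rw [e1, e2]
    have h2p : ((Real.sqrt 2 : ℝ) : ℂ) ^ 2 = 2 := by rw [sq]; exact h2
    have h4 : ((Real.sqrt 2 : ℝ) : ℂ) ^ 4 = 4 := by
      have : ((Real.sqrt 2 : ℝ) : ℂ) ^ 4 = (((Real.sqrt 2 : ℝ) : ℂ) ^ 2) ^ 2 := by ring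
      rw [this, h2p]; norm_num
    field_simp
    ring_nf
    simp only [Complex.star_def, Complex.conj_I]
    ring_nf
    rw [h2p]
  calc (∑ᶠ x : ℤ, ∑ i : Fin 2, (starRingEnd ℂ) (ψ x i) * Ddyn ψ x i)
      = ∑ᶠ x : ℤ, (f (2 * x) + f (2 * x + 1)) := finsum_congr hpt
    _ = (∑ᶠ x : ℤ, f (2 * x)) + ∑ᶠ x : ℤ, f (2 * x + 1) := by
        refine finsum_add_distrib ?_ ?_
        · exact ((hfin.preimage (show Injective fun x : ℤ => 2 * x from fun a b h => by dsimp only at h; omega).injOn)).subset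
            (by intro x hx; exact hx)
        · exact ((hfin.preimage (show Injective fun x : ℤ => 2 * x + 1 from fun a b h => by dsimp only at h; omega).injOn)).subset
            (by intro x hx; exact hx)
    _ = ∑ᶠ n : ℤ, f n := (finsum_even_odd f hfin).symm
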